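/- Let U = ⊕_{k=1}^m J^{(k)}e_k ⊆ S^m_d be a quasi-stable monomial module such that every ideal J^{(k)} is saturated (i.e. J^{(k)} = (J^{(k)} : (x_0,…,x_n)^∞)), let r(U) be the maximal degree of an element of P(U), and let G be a P(U)-marked set. Then G is a P(U)-marked basis if and only if N(U,⟨G⟩)_{r(U)+1} = {0}, equivalently if and only if ⟨G⟩_{r(U)+1} = ⟨G^{(r(U)+1)}⟩^A. -/

import Mathlib

open MvPolynomial

namespace MB

/-- Exponent (multi-index) of a term in the variables `x_0, …, x_n`. -/
abbrev Exp (n : ℕ) := Fin (n+1) →₀ ℕ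

variable {n : ℕ}

/-- Total degree of a term. -/
def degE (α : Exp n) : ℕ := α.sum fun _ e => e

/-- `x_i` is a multiplicative variable for the term `x^α`, i.e. `x_i ≤ min(x^α)`. -/
def mult (α : Exp n) (i : Fin (n+1)) : Prop := ∀ j ∈ α.support, i ≤ j

/-- Every variable occurring in `x^δ` is multiplicative for `x^α`. -/
def multExp (α δ : Exp n) : Prop := ∀ i ∈ δ.support, mult α i

/-- Pommaret cone of a term. -/
def pommaretCone (α : Exp n) : Set (Exp n) := {γ | ∃ δ, multExp α δ ∧ γ = α + δ}

/-- A set of terms is (the set of terms of) a monomial ideal. -/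
def IsMonomialIdeal (T : Set (Exp n)) : Prop := ∀ α ∈ T, ∀ β, α + β ∈ T

/-- `P` is a Pommaret basis of the set of terms `T`: the terms of `T` are the
disjoint union of the Pommaret cones of the elements of `P`. -/
def IsPommaretBasis (P : Finset (Exp n)) (T : Set (Exp n)) : Prop :=
  (∀ γ, γ ∈ T ↔ ∃ α ∈ P, γ ∈ pommaretCone α) ∧
  ∀ γ : Exp n, ∀ α ∈ P, ∀ β ∈ P, γ ∈ pommaretCone α → γ ∈ pommaretCone β → α = β

/-- Lexicographic order on terms (with `x_n > … > x_0` significance). -/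
def lexLt (η δ : Exp n) : Prop := ∃ i, η i < δ i ∧ ∀ j, i < j → η j = δ j

/-- Terms of the saturation `(J : (x_0,…,x_n)^∞)` of a monomial ideal. -/
def satTerms (T : Set (Exp n)) : Set (Exp n) :=
  {α | ∃ j : ℕ, ∀ β : Exp n, degE β = j → α + β ∈ T}

section ModuleDefs

variable (A : Type*) [CommRing A] {κ : Type*} [Fintype κ] [DecidableEq κ]

/-- The term `x^α e_k` of the free module. -/
noncomputable def termV (α : Exp n) (k : κ) : κ → MvPolynomial (Fin (n+1)) A :=
  Pi.single k (monomial α 1)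

variable {A}

/-- Homogeneity of degree `s` in `S^m_d` (with weight vector `d`). -/
def IsHomogV (d : κ → ℤ) (f : κ → MvPolynomial (Fin (n+1)) A) (s : ℤ) : Prop :=
  ∀ k, ∀ β ∈ (f k).support, (degE β : ℤ) + d k = s

variable (A)

/-- The degree-`s` component `(S^m_d)_s` as an `A`-submodule. -/
noncomputable def homogCompV (d : κ → ℤ) (s : ℤ) :
    Submodule A (κ → MvPolynomial (Fin (n+1)) A) where
  carrier := {f | IsHomogV d f s}
  add_mem' := by
    intro f g hf hg k β hβ
    rcases Finset.mem_union.mp (MvPolynomial.support_add hβ) with h | h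
    · exact hf k β h
    · exact hg k β h
  zero_mem' := by intro k β hβ; simp at hβ
  smul_mem' := by
    intro a f hf k β hβ
    exact hf k β (MvPolynomial.support_smul hβ)

/-- The set `N(U)` of terms of `S^m_d` not belonging to the monomial module `U = ⊕ J^(k) e_k`. -/
def NUTerms (J : κ → Set (Exp n)) : Set (κ → MvPolynomial (Fin (n+1)) A) :=
  {v | ∃ k, ∃ α, α ∉ J k ∧ v = termV A α k}

/-- The degree-`s` part `N(U)_s`. -/
def NUTermsDeg (d : κ → ℤ) (J : κ → Set (Exp n)) (s : ℤ) :
    Set (κ → MvPolynomial (Fin (n+1)) A) :=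
  {v | ∃ k, ∃ α, α ∉ J k ∧ (degE α : ℤ) + d k = s ∧ v = termV A α k}

variable {A}

/-- A `P(U)`-marked set: for each `x^α e_k` with `α ∈ P k`, the element `g α k` has
head term `x^α e_k` (coefficient `1`) and all other terms in `N(U)` of the same degree. -/
def IsMarkedSetV (d : κ → ℤ) (J : κ → Set (Exp n)) (P : κ → Finset (Exp n))
    (g : Exp n → κ → (κ → MvPolynomial (Fin (n+1)) A)) : Prop :=
  ∀ k, ∀ α ∈ P k, ∀ l, ∀ β ∈ ((g α k - termV A α k) l).support,
    β ∉ J l ∧ (degE β : ℤ) + d l = (degE α : ℤ) + d k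

/-- The underlying set of elements of the marked set `G`. -/
def GSet (P : κ → Finset (Exp n)) (g : Exp n → κ → (κ → MvPolynomial (Fin (n+1)) A)) :
    Set (κ → MvPolynomial (Fin (n+1)) A) :=
  {v | ∃ k, ∃ α ∈ P k, v = g α k}

/-- The set `G^(s)` of multiplicative multiples of elements of `G` of degree `s`. -/
def GSdeg (d : κ → ℤ) (P : κ → Finset (Exp n))
    (g : Exp n → κ → (κ → MvPolynomial (Fin (n+1)) A)) (s : ℤ) :
    Set (κ → MvPolynomial (Fin (n+1)) A) :=
  {v | ∃ k, ∃ α ∈ P k, ∃ δ : Exp n, multExp α δ ∧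
    (degE δ : ℤ) + (degE α : ℤ) + d k = s ∧ v = (monomial δ (1:A)) • g α k}

/-- The `S`-submodule `⟨G⟩` generated by the marked set. -/
noncomputable def GmodS (P : κ → Finset (Exp n))
    (g : Exp n → κ → (κ → MvPolynomial (Fin (n+1)) A)) :
    Submodule (MvPolynomial (Fin (n+1)) A) (κ → MvPolynomial (Fin (n+1)) A) :=
  Submodule.span _ (GSet P g)

/-- The degree-`s` component `⟨G⟩_s` as an `A`-submodule. -/
noncomputable def GmodDeg (d : κ → ℤ) (P : κ → Finset (Exp n))
    (g : Exp n → κ → (κ → MvPolynomial (Fin (n+1)) A)) (s : ℤ) :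
    Submodule A (κ → MvPolynomial (Fin (n+1)) A) :=
  (GmodS P g).restrictScalars A ⊓ homogCompV A d s

/-- `G` is a marked basis: `(S^m_d)_s = ⟨G⟩_s ⊕ ⟨N(U)_s⟩^A` for every degree `s`. -/
def MarkedBasisProp (d : κ → ℤ) (J : κ → Set (Exp n)) (P : κ → Finset (Exp n))
    (g : Exp n → κ → (κ → MvPolynomial (Fin (n+1)) A)) : Prop :=
  ∀ s : ℤ,
    homogCompV A d s = GmodDeg d P g s ⊔ Submodule.span A (NUTermsDeg A d J s) ∧
    GmodDeg d P g s ⊓ Submodule.span A (NUTermsDeg A d J s) = ⊥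

/-- One step of the reduction relation `→_G`. -/
def RedStep (P : κ → Finset (Exp n)) (g : Exp n → κ → (κ → MvPolynomial (Fin (n+1)) A))
    (h h' : κ → MvPolynomial (Fin (n+1)) A) : Prop :=
  ∃ k, ∃ α ∈ P k, ∃ η : Exp n, multExp α η ∧
    (h k).coeff (η + α) ≠ 0 ∧
    h' = h - ((h k).coeff (η + α)) • ((monomial η (1:A)) • g α k)

end ModuleDefs

section IdealDefs

variable {A : Type*} [CommRing A]

/-- A `P(J)`-marked set of polynomials. -/
def IsMarkedSetI (T : Set (Exp n)) (P : Finset (Exp n))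
    (g : Exp n → MvPolynomial (Fin (n+1)) A) : Prop :=
  ∀ α ∈ P, ∀ β ∈ (g α - monomial α (1:A)).support, β ∉ T ∧ degE β = degE α

variable (A)

/-- The degree-`s` monomials not in `T`. -/
def NTermsDegI (T : Set (Exp n)) (s : ℕ) : Set (MvPolynomial (Fin (n+1)) A) :=
  {p | ∃ β, β ∉ T ∧ degE β = s ∧ p = monomial β (1:A)}

variable {A}

/-- Degree-`s` part of the ideal generated by the marked set. -/
noncomputable def IdealDegI (P : Finset (Exp n)) (g : Exp n → MvPolynomial (Fin (n+1)) A)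
    (s : ℕ) : Submodule A (MvPolynomial (Fin (n+1)) A) :=
  (Ideal.span (g '' ↑P)).restrictScalars A ⊓ homogeneousSubmodule (Fin (n+1)) A s

/-- A `P(J)`-marked basis of polynomials: `S_s = (G)_s ⊕ ⟨N(J)_s⟩^A` for all `s`. -/
def IsMarkedBasisI (T : Set (Exp n)) (P : Finset (Exp n))
    (g : Exp n → MvPolynomial (Fin (n+1)) A) : Prop :=
  IsMarkedSetI T P g ∧ ∀ s : ℕ,
    homogeneousSubmodule (Fin (n+1)) A s
      = IdealDegI P g s ⊔ Submodule.span A (NTermsDegI A T s) ∧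
    IdealDegI P g s ⊓ Submodule.span A (NTermsDegI A T s) = ⊥

/-- The polynomial `p` involves only multiplicative variables of `x^α`. -/
def multPoly (α : Exp n) (p : MvPolynomial (Fin (n+1)) A) : Prop :=
  ∀ β ∈ p.support, multExp α β

end IdealDefs

section SyzDefs

variable {A : Type*} [CommRing A]

/-- The map `(c_l) ↦ Σ_l c_l f_{α(l)}` whose kernel is `Syz(G)`. -/
noncomputable def syzMap (P : Finset (Exp n)) (g : Exp n → MvPolynomial (Fin (n+1)) A) :
    (↥P → MvPolynomial (Fin (n+1)) A) →ₗ[MvPolynomial (Fin (n+1)) A]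
      MvPolynomial (Fin (n+1)) A where
  toFun c := ∑ l : ↥P, c l * g l.1
  map_add' c c' := by simp [add_mul, Finset.sum_add_distrib]
  map_smul' a c := by simp [Finset.mul_sum, mul_assoc]

/-- Weight vector for the syzygy module: `d_l = deg x^{α(l)}`. -/
def ddeg (P : Finset (Exp n)) : ↥P → ℤ := fun l => (degE l.1 : ℤ)

/-- Terms of the monomial ideal generated by the nonmultiplicative variables of `x^{α(l)}`. -/
def Jsyz (P : Finset (Exp n)) : ↥P → Set (Exp n) :=
  fun l => {β | ∃ i ∈ β.support, ¬ mult (l : Exp n) i}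

open Classical in
/-- The claimed Pommaret basis `{x_i e_l : x_i nonmultiplicative for x^{α(l)}}`. -/
noncomputable def Psyz (P : Finset (Exp n)) : ↥P → Finset (Exp n) := fun l =>
  (Finset.univ.filter fun i : Fin (n+1) => ¬ mult (l : Exp n) i).image
    fun i => Finsupp.single i 1

open Classical in
/-- The syzygy `S_{k;i} = x_i e_k − Σ_l P_l^{k;i} e_l`. -/
noncomputable def Ssyz (P : Finset (Exp n))
    (Pc : ↥P → Fin (n+1) → ↥P → MvPolynomial (Fin (n+1)) A)
    (k : ↥P) (i : Fin (n+1)) : ↥P → MvPolynomial (Fin (n+1)) A :=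
  fun l => (if l = k then (X i : MvPolynomial (Fin (n+1)) A) else 0) - Pc k i l

/-- The set `G_Syz^(s)`. -/
def GSyzDeg (P : Finset (Exp n))
    (Pc : ↥P → Fin (n+1) → ↥P → MvPolynomial (Fin (n+1)) A) (s : ℤ) :
    Set (↥P → MvPolynomial (Fin (n+1)) A) :=
  {v | ∃ k : ↥P, ∃ i : Fin (n+1), ¬ mult (k : Exp n) i ∧ ∃ δ : Exp n,
    (∀ j ∈ δ.support, j ≤ i) ∧ (degE δ : ℤ) + 1 + ddeg P k = s ∧
    v = (monomial δ (1:A)) • Ssyz P Pc k i}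

end SyzDefs

/-! ### Auxiliary combinatorial lemmas -/

section AuxComb

variable {n : ℕ}

lemma aux_degE_add (a b : Exp n) : degE (a + b) = degE a + degE b := by
  classical
  exact Finsupp.sum_add_index' (fun _ => rfl) (fun _ _ _ => rfl)

lemma aux_degE_single (i : Fin (n+1)) (t : ℕ) : degE (Finsupp.single i t) = t := by
  classical
  simp [degE, Finsupp.sum_single_index]

lemma aux_degE_eq_degree (a : Exp n) : degE a = a.degree := rfl

lemma aux_apply_le_degE (a : Exp n) (i : Fin (n+1)) : a i ≤ degE a := by
  classical
  by_cases h : i ∈ a.support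
  · exact Finset.single_le_sum (f := fun j => a j) (fun _ _ => Nat.zero_le _) h
  · simp [Finsupp.notMem_support_iff.mp h]

lemma aux_degE_eq_zero {a : Exp n} (h : degE a = 0) : a = 0 := by
  ext i
  have := aux_apply_le_degE a i
  simp only [Finsupp.coe_zero, Pi.zero_apply]
  omega

lemma aux_multExp_zero (α : Exp n) : multExp α 0 := by
  intro i hi
  simp at hi

lemma aux_self_mem_cone (α : Exp n) : α ∈ pommaretCone α :=
  ⟨0, aux_multExp_zero α, (add_zero α).symm⟩

lemma aux_lexLt_irrefl (a : Exp n) : ¬ lexLt a a := by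
  rintro ⟨i, hi, -⟩
  exact lt_irrefl _ hi

lemma aux_lexLt_trans {a b c : Exp n} (h1 : lexLt a b) (h2 : lexLt b c) : lexLt a c := by
  obtain ⟨i, hi, ha⟩ := h1
  obtain ⟨i', hi', ha'⟩ := h2
  rcases lt_trichotomy i i' with h | h | h
  · exact ⟨i', by rw [ha i' h]; exact hi', fun j hj => (ha j (h.trans hj)).trans (ha' j hj)⟩
  · subst h
    exact ⟨i, hi.trans hi', fun j hj => (ha j hj).trans (ha' j hj)⟩
  · exact ⟨i, by rw [← ha' i h]; exact hi, fun j hj => (ha j hj).trans (ha' j (h.trans hj))⟩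

lemma aux_lexLt_total {a b : Exp n} (h : a ≠ b) : lexLt a b ∨ lexLt b a := by
  classical
  set D := (a.support ∪ b.support).filter (fun j => a j ≠ b j) with hD
  have hmem : ∀ j, a j ≠ b j → j ∈ D := by
    intro j hj
    refine Finset.mem_filter.mpr ⟨?_, hj⟩
    rcases eq_or_ne (a j) 0 with h0 | h0
    · refine Finset.mem_union_right _ (Finsupp.mem_support_iff.mpr ?_)
      rw [h0] at hj
      exact hj.symm
    · exact Finset.mem_union_left _ (Finsupp.mem_support_iff.mpr h0)
  have hne : D.Nonempty := by
    obtain ⟨i, hi⟩ : ∃ i, a i ≠ b i := by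
      by_contra hc
      push_neg at hc
      exact h (Finsupp.ext hc)
    exact ⟨i, hmem i hi⟩
  set i := D.max' hne with hi
  have hiD : i ∈ D := D.max'_mem hne
  have habove : ∀ j, i < j → a j = b j := by
    intro j hj
    by_contra hc
    exact absurd (Finset.le_max' D j (hmem j hc)) (not_le.mpr hj)
  have hne' : a i ≠ b i := (Finset.mem_filter.mp hiD).2
  rcases lt_or_gt_of_ne hne' with h' | h'
  · exact Or.inl ⟨i, h', habove⟩
  · exact Or.inr ⟨i, h', fun j hj => (habove j hj).symm⟩

lemma aux_lexLt_wf : WellFounded (lexLt (n := n)) := by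
  classical
  haveI : IsStrictTotalOrder (Fin (n+1)) (fun x y : Fin (n+1) => x > y) :=
    { trichotomous := fun a b h1 h2 => le_antisymm (not_lt.mp h1) (not_lt.mp h2)
      irrefl := fun a ha => lt_irrefl _ ha
      trans := fun a b c hab hbc => lt_trans hbc hab }
  have hw : WellFounded (Finsupp.Lex (fun x y : Fin (n+1) => x > y) (fun x y : ℕ => x < y)) :=
    Finsupp.Lex.wellFounded_of_finite _ (Nat.lt_wfRel.wf)
  refine Subrelation.wf ?_ hw
  rintro x y ⟨i, hi, hab⟩
  exact ⟨i, fun d hd => hab d hd, hi⟩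

lemma aux_exists_lexMax {X : Type*} (f : X → Exp n) (T : Finset X) (hne : T.Nonempty) :
    ∃ v0 ∈ T, ∀ v ∈ T, ¬ lexLt (f v0) (f v) := by
  classical
  induction T using Finset.induction_on with
  | empty => simp at hne
  | @insert a T' ha ih =>
    rcases T'.eq_empty_or_nonempty with h | h
    · subst h
      exact ⟨a, Finset.mem_insert_self _ _, by
        intro v hv
        simp only [Finset.mem_insert, Finset.notMem_empty, or_false] at hv
        subst hv
        exact aux_lexLt_irrefl _⟩
    · obtain ⟨m, hm, hmax⟩ := ih h
      by_cases hc : lexLt (f m) (f a)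
      · refine ⟨a, Finset.mem_insert_self _ _, ?_⟩
        intro v hv
        rcases Finset.mem_insert.mp hv with rfl | hv'
        · exact aux_lexLt_irrefl _
        · intro hlt
          exact hmax v hv' (aux_lexLt_trans hc hlt)
      · refine ⟨m, Finset.mem_insert_of_mem hm, ?_⟩
        intro v hv
        rcases Finset.mem_insert.mp hv with rfl | hv'
        · exact hc
        · exact hmax v hv'

/-- The key combinatorial lemma on Pommaret cones: if `δ + β = δ' + α'` with `δ'`
multiplicative for `α'` and `δ'` not lex-smaller than `δ`, then either the two
decompositions coincide or `β` lies strictly inside the cone of `α'`. -/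
lemma aux_gkl {δ β δ' α' : Exp n} (hsum : δ + β = δ' + α') (hm : multExp α' δ')
    (hnl : ¬ lexLt δ' δ) :
    (δ = δ' ∧ β = α') ∨ ∃ ε : Exp n, ε ≠ 0 ∧ multExp α' ε ∧ β = α' + ε := by
  classical
  have hpt : ∀ l, δ l + β l = δ' l + α' l := by
    intro l
    have := congrFun (congrArg (fun (x : Exp n) => (x : Fin (n+1) → ℕ)) hsum) l
    simpa using this
  rcases eq_or_ne δ δ' with h | h
  · left
    refine ⟨h, ?_⟩
    ext l
    have := hpt l
    rw [h] at this
    omega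
  · right
    have hlt : lexLt δ δ' := (aux_lexLt_total h).resolve_right hnl
    obtain ⟨i, hi, hab⟩ := hlt
    have hsupp : i ∈ δ'.support := Finsupp.mem_support_iff.mpr (by omega)
    have hmult := hm i hsupp
    have hcase : ∀ l, (l < i → α' l = 0) ∧ (i < l → β l = α' l) := by
      intro l
      constructor
      · intro hl
        by_contra hc
        exact absurd (hmult l (Finsupp.mem_support_iff.mpr hc)) (not_le.mpr hl)
      · intro hl
        have h1 := hpt l
        have h2 := hab l hl
        omega
    have hle : α' ≤ β := by
      rw [Finsupp.le_def]
      intro l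
      rcases lt_trichotomy l i with hl | hl | hl
      · rw [(hcase l).1 hl]; exact Nat.zero_le _
      · subst hl
        have := hpt l
        omega
      · rw [(hcase l).2 hl]
    refine ⟨β - α', ?_, ?_, ?_⟩
    · intro hc
      have hci : (β - α') i = 0 := by rw [hc]; rfl
      rw [Finsupp.tsub_apply] at hci
      have := hpt i
      omega
    · intro l hl
      have hl' : l ≤ i := by
        by_contra hc
        push_neg at hc
        rw [Finsupp.mem_support_iff, Finsupp.tsub_apply, (hcase l).2 hc] at hl
        omega
      intro m hmm
      exact hl'.trans (hmult m hmm)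
    · rw [add_tsub_cancel_of_le hle]

/-- If `x_j` is non-multiplicative for `α ∈ P` and `x_j x^α = x^{δ'} x^{α'}` is a
decomposition with `α' ∈ P`, then `δ'` is lex-smaller than `x_j`. -/
lemma aux_H {Pk : Finset (Exp n)} {T : Set (Exp n)} (hbasis : IsPommaretBasis Pk T)
    {α α' δ' : Exp n} (hα : α ∈ Pk) (hα' : α' ∈ Pk) {j : Fin (n+1)} (hnm : ¬ mult α j)
    (hm : multExp α' δ') (hsum : Finsupp.single j 1 + α = δ' + α') :
    lexLt δ' (Finsupp.single j 1) := by
  classical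
  by_contra hnl
  rcases aux_gkl hsum hm hnl with ⟨h1, h2⟩ | ⟨ε, hεne, hεm, hεeq⟩
  · apply hnm
    have hj : j ∈ δ'.support := by
      rw [← h1]
      simp
    have := hm j hj
    rwa [← h2] at this
  · have hcone' : α ∈ pommaretCone α' := ⟨ε, hεm, hεeq⟩
    have heq : α = α' := hbasis.2 α α hα α' hα' (aux_self_mem_cone α) hcone'
    rw [← heq] at hεeq
    have : ε = 0 := by
      have := hεeq.symm
      nth_rewrite 2 [← add_zero α] at this
      exact (add_left_cancel this)
    exact hεne this

lemma aux_coe_eq {a b : Exp n} (h : a = b) (l : Fin (n+1)) : a l = b l := by rw [h]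

lemma aux_mem_of_basis {T : Set (Exp n)} {Pk : Finset (Exp n)}
    (hbasis : IsPommaretBasis Pk T) {α : Exp n} (hα : α ∈ Pk) : α ∈ T :=
  (hbasis.1 α).mpr ⟨α, hα, aux_self_mem_cone α⟩

lemma aux_satC {T : Set (Exp n)} {Pk : Finset (Exp n)} (hmi : IsMonomialIdeal T)
    (hbasis : IsPommaretBasis Pk T) (i : Fin (n+1)) :
    ∀ t : ℕ, ∀ β : Exp n, β + Finsupp.single 0 t ∈ T → ∃ u : ℕ, β + Finsupp.single i u ∈ T := by
  classical
  intro t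
  induction t using Nat.strong_induction_on with
  | _ t IH =>
  intro β hβ
  rcases Nat.eq_zero_or_pos t with ht0 | htpos
  · subst ht0
    exact ⟨0, by simpa using hβ⟩
  rcases eq_or_ne i 0 with rfl | hi0
  · exact ⟨t, hβ⟩
  set γ := β + Finsupp.single 0 t with hγdef
  have hγ0 : γ 0 = β 0 + t := by simp [hγdef]
  have hγl : ∀ l, l ≠ 0 → γ l = β l := by
    intro l hl
    simp [hγdef, Finsupp.single_eq_of_ne' (fun hh => hl hh.symm)]
  have hdec : ∀ u : ℕ, ∃ α' ∈ Pk, ∃ δ' : Exp n, multExp α' δ' ∧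
      γ + Finsupp.single i u = α' + δ' := by
    intro u
    have h1 : γ + Finsupp.single i u ∈ T := hmi γ hβ _
    obtain ⟨α', hα', δ', hm, he⟩ := (hbasis.1 _).mp h1
    exact ⟨α', hα', δ', hm, he⟩
  by_cases hgood : ∃ u : ℕ, ∃ α' ∈ Pk, ∃ δ' : Exp n, multExp α' δ' ∧
      γ + Finsupp.single i u = α' + δ' ∧ ¬ (β 0 < α' 0 ∧ δ' 0 = 0)
  · obtain ⟨u, α', hα', δ', hm, he, hbad⟩ := hgood
    have hpt : ∀ l, γ l + (Finsupp.single i u : Exp n) l = α' l + δ' l := by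
      intro l
      have := aux_coe_eq he l
      simpa using this
    by_cases hc : α' 0 ≤ β 0
    · have hle : α' ≤ β + Finsupp.single i u := by
        rw [Finsupp.le_def]
        intro l
        rcases eq_or_ne l 0 with rfl | hl
        · have : β 0 ≤ (β + Finsupp.single i u) 0 := by simp
          omega
        · have h1 := hpt l
          have h2 := hγl l hl
          have : (β + Finsupp.single i u) l = β l + (Finsupp.single i u : Exp n) l := by simp
          omega
      refine ⟨u, ?_⟩
      have hT : α' + ((β + Finsupp.single i u) - α') ∈ T :=
        hmi α' (aux_mem_of_basis hbasis hα') _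
      rwa [add_tsub_cancel_of_le hle] at hT
    · push_neg at hc
      have hδ'0 : δ' 0 ≠ 0 := fun h => hbad ⟨hc, h⟩
      have hδ'supp : ∀ l, l ≠ 0 → δ' l = 0 := by
        intro l hl
        by_contra hcc
        have hl0 : (0 : Fin (n+1)) ∈ α'.support := Finsupp.mem_support_iff.mpr (by omega)
        have := hm l (Finsupp.mem_support_iff.mpr hcc) 0 hl0
        exact hl (le_antisymm this (Fin.zero_le l))
      have hi0' : (Finsupp.single i u : Exp n) 0 = 0 := Finsupp.single_eq_of_ne' hi0
      have hd0 : δ' 0 ≤ t := by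
        have := hpt 0
        omega
      have hkey : (β + Finsupp.single i u) + Finsupp.single 0 (t - δ' 0) = α' := by
        ext l
        rcases eq_or_ne l 0 with rfl | hl
        · have h0 := hpt 0
          have : ((β + Finsupp.single i u) + Finsupp.single (0 : Fin (n+1)) (t - δ' 0)) 0
              = β 0 + (Finsupp.single i u : Exp n) 0 + (t - δ' 0) := by simp
          omega
        · have h1 := hpt l
          have h2 := hγl l hl
          have h3 := hδ'supp l hl
          have : ((β + Finsupp.single i u) + Finsupp.single (0 : Fin (n+1)) (t - δ' 0)) l
              = β l + (Finsupp.single i u : Exp n) l := by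
            simp [Finsupp.single_eq_of_ne' (fun hh => hl hh.symm)]
          omega
      have hker : (β + Finsupp.single i u) + Finsupp.single 0 (t - δ' 0) ∈ T := by
        rw [hkey]
        exact aux_mem_of_basis hbasis hα'
      have hlt : t - δ' 0 < t := by omega
      obtain ⟨u', hu'⟩ := IH (t - δ' 0) hlt (β + Finsupp.single i u) hker
      refine ⟨u + u', ?_⟩
      rw [Finsupp.single_add, ← add_assoc]
      exact hu'
  · push_neg at hgood
    have hall : ∀ u : ℕ, γ + Finsupp.single i u ∈ Pk := by
      intro u
      obtain ⟨α', hα', δ', hm, he⟩ := hdec u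
      have hbad := hgood u α' hα' δ' hm he
      have hδ' : δ' = 0 := by
        ext l
        rcases eq_or_ne l 0 with rfl | hl
        · simpa using hbad.2
        · by_contra hcc
          have hl0 : (0 : Fin (n+1)) ∈ α'.support := Finsupp.mem_support_iff.mpr (by
            have := hbad.1
            omega)
          have := hm l (Finsupp.mem_support_iff.mpr hcc) 0 hl0
          exact hl (le_antisymm this (Fin.zero_le l))
      rw [hδ', add_zero] at he
      rw [he]
      exact hα'
    have hmaps : ∀ u ∈ Finset.range (Pk.card + 1), γ + Finsupp.single i u ∈ Pk :=
      fun u _ => hall u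
    obtain ⟨u1, hu1, u2, hu2, hne, heq⟩ :=
      Finset.exists_ne_map_eq_of_card_lt_of_maps_to (by simp) hmaps
    exfalso
    apply hne
    have := aux_coe_eq heq i
    simp only [Finsupp.add_apply, Finsupp.single_eq_same] at this
    omega

lemma aux_sat {T : Set (Exp n)} {Pk : Finset (Exp n)} (hmi : IsMonomialIdeal T)
    (hbasis : IsPommaretBasis Pk T) {β : Exp n} {t : ℕ}
    (h : β + Finsupp.single 0 t ∈ T) : β ∈ satTerms T := by
  classical
  have hC : ∀ i : Fin (n+1), ∃ u, β + Finsupp.single i u ∈ T :=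
    fun i => aux_satC hmi hbasis i t β h
  choose u hu using hC
  refine ⟨∑ i : Fin (n+1), u i, fun η hη => ?_⟩
  have hex : ∃ i, u i ≤ η i := by
    by_contra hc
    push_neg at hc
    have h1 : degE η = ∑ i : Fin (n+1), η i := by
      rw [degE]
      exact Finsupp.sum_fintype _ _ (fun _ => rfl)
    have h2 : ∑ i : Fin (n+1), η i < ∑ i : Fin (n+1), u i :=
      Finset.sum_lt_sum_of_nonempty Finset.univ_nonempty (fun i _ => hc i)
    omega
  obtain ⟨i, hi⟩ := hex
  have hle : Finsupp.single i (u i) ≤ η := Finsupp.single_le_iff.mpr hi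
  have hT := hmi _ (hu i) (η - Finsupp.single i (u i))
  rwa [add_assoc, add_tsub_cancel_of_le hle] at hT

end AuxComb

/-! ### Auxiliary module-level lemmas -/

section AuxMod

variable {n : ℕ} {κ : Type*} [Fintype κ] [DecidableEq κ] {A : Type*} [CommRing A]

set_option linter.unusedSectionVars false

lemma aux_X_eq (j : Fin (n+1)) :
    (X j : MvPolynomial (Fin (n+1)) A) = monomial (Finsupp.single j 1) 1 := rfl

lemma aux_monomial_one_mul (δ : Exp n) (p : MvPolynomial (Fin (n+1)) A) (β : Exp n) :
    (monomial δ (1:A) * p).coeff (δ + β) = p.coeff β := by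
  rw [coeff_monomial_mul, one_mul]

lemma aux_coeff_monomial_mul_ne {δ γ : Exp n} {p : MvPolynomial (Fin (n+1)) A}
    (h : (monomial δ (1:A) * p).coeff γ ≠ 0) :
    ∃ β, p.coeff β ≠ 0 ∧ γ = δ + β := by
  rw [coeff_monomial_mul'] at h
  by_cases hle : δ ≤ γ
  · rw [if_pos hle, one_mul] at h
    exact ⟨γ - δ, h, (add_tsub_cancel_of_le hle).symm⟩
  · rw [if_neg hle] at h
    exact absurd rfl h

lemma aux_smul_apply (p : MvPolynomial (Fin (n+1)) A)
    (v : κ → MvPolynomial (Fin (n+1)) A) (k : κ) : (p • v) k = p * v k := rfl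

lemma aux_monomial_smul_smul (a b : Exp n) (v : κ → MvPolynomial (Fin (n+1)) A) :
    monomial a (1:A) • (monomial b (1:A) • v) = monomial (a+b) (1:A) • v := by
  rw [← mul_smul, monomial_mul, one_mul]

lemma aux_termV_apply_self (α : Exp n) (k : κ) :
    termV A α k k = monomial α (1:A) := Pi.single_eq_same _ _

lemma aux_termV_apply_ne (α : Exp n) {k l : κ} (h : l ≠ k) :
    termV A α k l = 0 := Pi.single_eq_of_ne h _

lemma aux_smul_termV (δ α : Exp n) (k : κ) :
    monomial δ (1:A) • termV A α k = termV A (δ + α) k := by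
  funext l
  rcases eq_or_ne l k with rfl | hl
  · rw [aux_smul_apply, aux_termV_apply_self, aux_termV_apply_self, monomial_mul, one_mul]
  · rw [aux_smul_apply, aux_termV_apply_ne _ hl, aux_termV_apply_ne _ hl, mul_zero]

lemma aux_coeff_termV (α β : Exp n) (k l : κ) :
    ((termV A α k) l).coeff β = if l = k ∧ β = α then 1 else 0 := by
  rcases eq_or_ne l k with rfl | hl
  · rw [aux_termV_apply_self, coeff_monomial]
    by_cases h : β = α
    · simp [h]
    · simp only [h, and_false, if_false]
      rw [if_neg (fun hh => h hh.symm)]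
  · rw [aux_termV_apply_ne _ hl]
    simp [hl]

/-- Writing a vector as an `A`-combination of its terms. -/
lemma aux_mem_of_termV (V : Submodule A (κ → MvPolynomial (Fin (n+1)) A))
    (v : κ → MvPolynomial (Fin (n+1)) A)
    (h : ∀ k β, (v k).coeff β ≠ 0 → termV A β k ∈ V) : v ∈ V := by
  classical
  have hv : v = ∑ k : κ, Pi.single k (v k) := by
    rw [Finset.univ_sum_single]
  rw [hv]
  refine Submodule.sum_mem _ fun k _ => ?_
  have hsingle : Pi.single (M := fun _ : κ => MvPolynomial (Fin (n+1)) A) k (v k)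
      = ∑ β ∈ (v k).support, (v k).coeff β • termV A β k := by
    conv_lhs => rw [(v k).as_sum,
      ← LinearMap.single_apply (R := A) (φ := fun _ : κ => MvPolynomial (Fin (n+1)) A)]
    rw [map_sum (LinearMap.single A (fun _ : κ => MvPolynomial (Fin (n+1)) A) k)]
    refine Finset.sum_congr rfl fun β _ => ?_
    have hmon : (monomial β) ((v k).coeff β) = (v k).coeff β • monomial β (1:A) := by
      rw [smul_monomial, smul_eq_mul, mul_one]
    rw [LinearMap.single_apply, hmon, Pi.single_smul]
    rfl
  rw [hsingle]
  exact Submodule.sum_mem _ fun β hβ =>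
    Submodule.smul_mem _ _ (h k β (MvPolynomial.mem_support_iff.mp hβ))

lemma aux_mem_homog {d : κ → ℤ} {v : κ → MvPolynomial (Fin (n+1)) A} {s : ℤ} :
    v ∈ homogCompV A d s ↔ IsHomogV d v s := Iff.rfl

lemma aux_homog_termV (d : κ → ℤ) (α : Exp n) (k : κ) :
    termV A α k ∈ homogCompV A d ((degE α : ℤ) + d k) := by
  intro l β hβ
  have hne := MvPolynomial.mem_support_iff.mp hβ
  rw [aux_coeff_termV] at hne
  by_cases h : l = k ∧ β = α
  · rw [h.2, h.1]
  · exact absurd (if_neg h) hne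

lemma aux_homog_monomial_smul (d : κ → ℤ) (δ : Exp n)
    {v : κ → MvPolynomial (Fin (n+1)) A} {t : ℤ} (h : v ∈ homogCompV A d t) :
    (monomial δ (1:A)) • v ∈ homogCompV A d ((degE δ : ℤ) + t) := by
  intro k β hβ
  have hne := MvPolynomial.mem_support_iff.mp hβ
  rw [aux_smul_apply] at hne
  obtain ⟨β', hβ', rfl⟩ := aux_coeff_monomial_mul_ne hne
  have hd := h k β' (MvPolynomial.mem_support_iff.mpr hβ')
  rw [aux_degE_add]
  push_cast
  linarith

end AuxMod

section AuxMarked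

variable {n : ℕ} {κ : Type*} [Fintype κ] [DecidableEq κ] {A : Type*} [CommRing A]

set_option linter.unusedSectionVars false

variable (P : κ → Finset (Exp n)) (gb : Exp n → κ → (κ → MvPolynomial (Fin (n+1)) A))

/-- All multiplicative multiples of elements of the marked set (in any degree). -/
def MMset : Set (κ → MvPolynomial (Fin (n+1)) A) :=
  {v | ∃ k α δ, α ∈ P k ∧ multExp α δ ∧ v = (monomial δ (1:A)) • gb α k}

variable (J : κ → Set (Exp n))

/-- The submodule of vectors all of whose "ideal" coefficients vanish. -/
noncomputable def ZUsub : Submodule A (κ → MvPolynomial (Fin (n+1)) A) where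
  carrier := {v | ∀ k γ, γ ∈ J k → (v k).coeff γ = 0}
  add_mem' := by
    intro a b ha hb k γ hγ
    rw [Pi.add_apply, coeff_add, ha k γ hγ, hb k γ hγ, add_zero]
  zero_mem' := by
    intro k γ hγ
    simp
  smul_mem' := by
    intro c v hv k γ hγ
    rw [Pi.smul_apply, coeff_smul, hv k γ hγ, smul_zero]

variable {P gb J}
variable {d : κ → ℤ}

lemma aux_GSdeg_subset_MMset (s : ℤ) : GSdeg d P gb s ⊆ MMset P gb := by
  rintro v ⟨k, α, hα, δ, hm, hdeg, rfl⟩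
  exact ⟨k, α, δ, hα, hm, rfl⟩

lemma aux_self_memJ (hQS : ∀ k, IsMonomialIdeal (J k) ∧ IsPommaretBasis (P k) (J k))
    {k : κ} {α : Exp n} (hα : α ∈ P k) : α ∈ J k :=
  aux_mem_of_basis (hQS k).2 hα

lemma aux_g_coeff (hG : IsMarkedSetV d J P gb) {k : κ} {α : Exp n} (hα : α ∈ P k)
    {l : κ} {β : Exp n} (h : ((gb α k) l).coeff β ≠ 0) :
    (l = k ∧ β = α) ∨ (β ∉ J l ∧ (degE β : ℤ) + d l = (degE α : ℤ) + d k) := by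
  by_cases hc : ((gb α k - termV A α k) l).coeff β = 0
  · left
    have h1 : (gb α k) l = (gb α k - termV A α k) l + (termV A α k) l := by
      rw [Pi.sub_apply, sub_add_cancel]
    rw [h1, coeff_add, hc, zero_add, aux_coeff_termV] at h
    by_cases hh : l = k ∧ β = α
    · exact hh
    · rw [if_neg hh] at h
      exact absurd rfl h
  · right
    exact hG k α hα l β (MvPolynomial.mem_support_iff.mpr hc)

lemma aux_g_head (hQS : ∀ k, IsMonomialIdeal (J k) ∧ IsPommaretBasis (P k) (J k))
    (hG : IsMarkedSetV d J P gb) {k : κ} {α : Exp n} (hα : α ∈ P k) :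
    ((gb α k) k).coeff α = 1 := by
  have h1 : (gb α k) k = (gb α k - termV A α k) k + (termV A α k) k := by
    rw [Pi.sub_apply, sub_add_cancel]
  have h2 : ((gb α k - termV A α k) k).coeff α = 0 := by
    by_contra hc
    exact (hG k α hα k α (MvPolynomial.mem_support_iff.mpr hc)).1 (aux_self_memJ hQS hα)
  rw [h1, coeff_add, h2, zero_add, aux_coeff_termV, if_pos ⟨rfl, rfl⟩]

lemma aux_homog_g (hG : IsMarkedSetV d J P gb) {k : κ} {α : Exp n} (hα : α ∈ P k) :
    gb α k ∈ homogCompV A d ((degE α : ℤ) + d k) := by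
  have h1 : gb α k = termV A α k + (gb α k - termV A α k) := by
    rw [add_sub_cancel]
  rw [h1]
  refine Submodule.add_mem _ (aux_homog_termV d α k) ?_
  intro l β hβ
  exact (hG k α hα l β hβ).2

lemma aux_NU_le_ZU : Submodule.span A (NUTerms A J) ≤ ZUsub J := by
  rw [Submodule.span_le]
  rintro v ⟨k, α, hα, rfl⟩
  intro l γ hγ
  rw [aux_coeff_termV]
  by_cases h : l = k ∧ γ = α
  · exact absurd (h.1 ▸ h.2 ▸ hγ) hα
  · rw [if_neg h]

lemma aux_NTD_le_NU (s : ℤ) :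
    Submodule.span A (NUTermsDeg A d J s) ≤ Submodule.span A (NUTerms A J) := by
  refine Submodule.span_mono ?_
  rintro v ⟨k, α, h1, _, rfl⟩
  exact ⟨k, α, h1, rfl⟩

lemma aux_NTD_le_homog (s : ℤ) :
    Submodule.span A (NUTermsDeg A d J s) ≤ homogCompV A d s := by
  rw [Submodule.span_le]
  rintro v ⟨k, α, _, h2, rfl⟩
  rw [← h2]
  exact aux_homog_termV d α k

lemma aux_homog_NU_le_NTD (s : ℤ) {v : κ → MvPolynomial (Fin (n+1)) A}
    (hv1 : v ∈ Submodule.span A (NUTerms A J)) (hv2 : v ∈ homogCompV A d s) :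
    v ∈ Submodule.span A (NUTermsDeg A d J s) := by
  have hZ := aux_NU_le_ZU hv1
  refine aux_mem_of_termV _ _ ?_
  intro k β hβ
  refine Submodule.subset_span ⟨k, β, ?_, ?_, rfl⟩
  · intro hc
    exact hβ (hZ k β hc)
  · exact hv2 k β (MvPolynomial.mem_support_iff.mpr hβ)

/-- The triangularity lemma: any representation of an element of the span of the
multiplicative multiples exposes its lex-maximal head coefficient. -/
lemma aux_repr_control [Nonempty κ]
    (hQS : ∀ k, IsMonomialIdeal (J k) ∧ IsPommaretBasis (P k) (J k))
    (hG : IsMarkedSetV d J P gb)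
    (c : (κ → MvPolynomial (Fin (n+1)) A) →₀ A) (hc : ↑c.support ⊆ MMset P gb)
    (hne : c.support.Nonempty) :
    ∃ (kf : (κ → MvPolynomial (Fin (n+1)) A) → κ)
      (af df : (κ → MvPolynomial (Fin (n+1)) A) → Exp n),
      (∀ v ∈ c.support, af v ∈ P (kf v) ∧ multExp (af v) (df v) ∧
        v = monomial (df v) (1:A) • gb (af v) (kf v)) ∧
      ∃ v0 ∈ c.support,
        (df v0 + af v0) ∈ J (kf v0) ∧
        ((c.sum fun w a => a • w) (kf v0)).coeff (df v0 + af v0) = c v0 ∧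
        ∀ v ∈ c.support, ¬ lexLt (df v0) (df v) := by
  classical
  have hch : ∀ v : (κ → MvPolynomial (Fin (n+1)) A), v ∈ MMset P gb →
      ∃ k α δ, α ∈ P k ∧ multExp α δ ∧ v = monomial δ (1:A) • gb α k := fun v hv => hv
  choose! kf af df hP hM hE using hch
  refine ⟨kf, af, df, fun v hv => ⟨hP v (hc hv), hM v (hc hv), hE v (hc hv)⟩, ?_⟩
  obtain ⟨v0, hv0, hmax⟩ := aux_exists_lexMax df c.support hne
  have hP0 := hP v0 (hc hv0)
  have hM0 := hM v0 (hc hv0)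
  have hE0 := hE v0 (hc hv0)
  have hJ0 : df v0 + af v0 ∈ J (kf v0) := by
    have h := (hQS (kf v0)).1 (af v0) (aux_self_memJ hQS hP0) (df v0)
    rwa [add_comm] at h
  refine ⟨v0, hv0, hJ0, ?_, hmax⟩
  rw [Finsupp.sum]
  have happ : ((∑ w ∈ c.support, c w • w) (kf v0)) = ∑ w ∈ c.support, c w • (w (kf v0)) := by
    simp [Finset.sum_apply]
  rw [happ, MvPolynomial.coeff_sum, Finset.sum_eq_single v0]
  · have hhead : MvPolynomial.coeff (df v0 + af v0) (v0 (kf v0)) = 1 := by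
      have h1 : v0 (kf v0) = monomial (df v0) (1:A) * (gb (af v0) (kf v0)) (kf v0) := by
        rw [← aux_smul_apply, ← hE0]
      rw [h1, aux_monomial_one_mul, aux_g_head hQS hG hP0]
    rw [coeff_smul, hhead, smul_eq_mul, mul_one]
  · intro w hw hne'
    rw [coeff_smul]
    have hz : MvPolynomial.coeff (df v0 + af v0) (w (kf v0)) = 0 := by
      by_contra hcz
      have hEw := hE w (hc hw)
      rw [hEw, aux_smul_apply] at hcz
      obtain ⟨β, hβ, hβeq⟩ := aux_coeff_monomial_mul_ne hcz
      rcases aux_g_coeff hG (hP w (hc hw)) hβ with ⟨hk, hβα⟩ | ⟨hβJ, -⟩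
      · apply hne'
        have hcone1 : (df v0 + af v0 : Exp n) ∈ pommaretCone (af v0) :=
          ⟨df v0, hM0, add_comm _ _⟩
        have hcone2 : (df v0 + af v0 : Exp n) ∈ pommaretCone (af w) := by
          refine ⟨df w, hM w (hc hw), ?_⟩
          rw [hβα] at hβeq
          rw [hβeq, add_comm]
        have hPw : af w ∈ P (kf v0) := by
          rw [hk]
          exact hP w (hc hw)
        have ha : af w = af v0 :=
          (hQS (kf v0)).2.2 (df v0 + af v0) (af w) hPw (af v0) hP0 hcone2 hcone1
        have hd : df w = df v0 := by
          rw [hβα, ha] at hβeq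
          exact (add_right_cancel hβeq.symm)
        rw [hEw, ha, hd, ← hk, ← hE0]
      · have hsum : df w + β = df v0 + af v0 := hβeq.symm
        rcases aux_gkl hsum hM0 (hmax w hw) with ⟨-, h2'⟩ | ⟨ε, -, -, hεeq⟩
        · exact hβJ (by rw [h2']; exact aux_self_memJ hQS hP0)
        · exact hβJ (by
            rw [hεeq]
            exact (hQS (kf v0)).1 (af v0) (aux_self_memJ hQS hP0) ε)
    rw [hz, smul_zero]
  · intro h
    exact absurd hv0 h

/-- Independence: the span of the multiplicative multiples meets the span of the
terms outside `U` trivially. -/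
lemma aux_ind [Nonempty κ]
    (hQS : ∀ k, IsMonomialIdeal (J k) ∧ IsPommaretBasis (P k) (J k))
    (hG : IsMarkedSetV d J P gb)
    {v : κ → MvPolynomial (Fin (n+1)) A} (hv : v ∈ Submodule.span A (MMset P gb))
    (hZ : v ∈ ZUsub (A := A) J) : v = 0 := by
  classical
  obtain ⟨c, hc, hsum⟩ := Submodule.mem_span_set.mp hv
  rcases c.support.eq_empty_or_nonempty with h | h
  · rw [← hsum, Finsupp.sum, h, Finset.sum_empty]
  · exfalso
    obtain ⟨kf, af, df, hidx, v0, hv0, hJ0, hcoeff, -⟩ := aux_repr_control hQS hG c hc h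
    rw [hsum] at hcoeff
    rw [hZ (kf v0) _ hJ0] at hcoeff
    exact Finsupp.mem_support_iff.mp hv0 hcoeff.symm

/-- Spanning: every term of the free module of degree `s` lies in
`⟨G^{(s)}⟩ + ⟨N(U)_s⟩`. -/
lemma aux_span_term
    (hQS : ∀ k, IsMonomialIdeal (J k) ∧ IsPommaretBasis (P k) (J k))
    (hG : IsMarkedSetV d J P gb) (s : ℤ) (δ0 : Exp n) :
    ∀ (k : κ) (α γ : Exp n), α ∈ P k → multExp α δ0 → γ = α + δ0 →
      (degE γ : ℤ) + d k = s →
      termV A γ k ∈ Submodule.span A (GSdeg d P gb s)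
        ⊔ Submodule.span A (NUTermsDeg A d J s) := by
  classical
  refine aux_lexLt_wf.induction (C := fun δ0 => ∀ (k : κ) (α γ : Exp n), α ∈ P k →
    multExp α δ0 → γ = α + δ0 → (degE γ : ℤ) + d k = s →
    termV A γ k ∈ Submodule.span A (GSdeg d P gb s)
      ⊔ Submodule.span A (NUTermsDeg A d J s)) δ0 ?_
  intro δ IH k α γ hα hm hγ hdeg
  have hde : degE γ = degE α + degE δ := by rw [hγ, aux_degE_add]
  have hdeg' : (degE δ : ℤ) + (degE α : ℤ) + d k = s := by
    rw [hde] at hdeg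
    push_cast at hdeg
    linarith
  have hg1 : monomial δ (1:A) • gb α k ∈ Submodule.span A (GSdeg d P gb s) :=
    Submodule.subset_span ⟨k, α, hα, δ, hm, hdeg', rfl⟩
  have htermV : termV A γ k = monomial δ (1:A) • termV A α k := by
    rw [aux_smul_termV, add_comm δ α, ← hγ]
  have hkey : termV A γ k = monomial δ (1:A) • gb α k
      + (monomial δ (1:A) • termV A α k - monomial δ (1:A) • gb α k) := by
    rw [← htermV]
    abel
  rw [hkey]
  refine Submodule.add_mem _ (Submodule.mem_sup_left hg1) ?_
  rw [← smul_sub]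
  refine aux_mem_of_termV _ _ ?_
  intro l β' hβ'
  rw [aux_smul_apply] at hβ'
  obtain ⟨β, hβ, hβeq⟩ := aux_coeff_monomial_mul_ne hβ'
  have hβ2 : ((gb α k - termV A α k) l).coeff β ≠ 0 := by
    intro hcc
    apply hβ
    have hneg : (termV A α k - gb α k) l = -((gb α k - termV A α k) l) := by
      rw [Pi.sub_apply, Pi.sub_apply, neg_sub]
    rw [hneg, MvPolynomial.coeff_neg, hcc, neg_zero]
  obtain ⟨hβJ, hβdeg⟩ := hG k α hα l β (MvPolynomial.mem_support_iff.mpr hβ2)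
  have hdegβ' : (degE β' : ℤ) + d l = s := by
    rw [hβeq, aux_degE_add]
    push_cast
    push_cast at hβdeg hdeg'
    linarith
  by_cases hJl : β' ∈ J l
  · obtain ⟨α'', hα'', δ'', hm'', he''⟩ := ((hQS l).2.1 β').mp hJl
    have hlt : lexLt δ'' δ := by
      by_contra hnl
      have hsum2 : δ + β = δ'' + α'' := by
        rw [← hβeq, he'', add_comm]
      rcases aux_gkl hsum2 hm'' hnl with ⟨-, h2'⟩ | ⟨ε, -, -, hεeq⟩
      · exact hβJ (by rw [h2']; exact aux_self_memJ hQS hα'')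
      · exact hβJ (by rw [hεeq]; exact (hQS l).1 α'' (aux_self_memJ hQS hα'') ε)
    exact IH δ'' hlt l α'' β' hα'' hm'' he'' hdegβ'
  · exact Submodule.mem_sup_right (Submodule.subset_span ⟨l, β', hJl, hdegβ', rfl⟩)

lemma aux_F1
    (hQS : ∀ k, IsMonomialIdeal (J k) ∧ IsPommaretBasis (P k) (J k))
    (hG : IsMarkedSetV d J P gb) (s : ℤ) :
    homogCompV A d s ≤ Submodule.span A (GSdeg d P gb s)
      ⊔ Submodule.span A (NUTermsDeg A d J s) := by
  intro v hv
  refine aux_mem_of_termV _ _ ?_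
  intro k β hβ
  have hdeg := hv k β (MvPolynomial.mem_support_iff.mpr hβ)
  by_cases hJ : β ∈ J k
  · obtain ⟨α, hα, δ, hm, he⟩ := ((hQS k).2.1 β).mp hJ
    exact aux_span_term hQS hG s δ k α β hα hm he hdeg
  · exact Submodule.mem_sup_right (Submodule.subset_span ⟨k, β, hJ, hdeg, rfl⟩)

end AuxMarked

section AuxFinal

variable {n : ℕ} {κ : Type*} [Fintype κ] [DecidableEq κ] {A : Type*} [CommRing A]

set_option linter.unusedSectionVars false

variable {P : κ → Finset (Exp n)} {gb : Exp n → κ → (κ → MvPolynomial (Fin (n+1)) A)}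
variable {J : κ → Set (Exp n)} {d : κ → ℤ}

/-- Truncation to one weighted degree. -/
noncomputable def projP (m : ℤ) :
    MvPolynomial (Fin (n+1)) A →ₗ[A] MvPolynomial (Fin (n+1)) A :=
  if 0 ≤ m then homogeneousComponent m.toNat else 0

/-- Projection onto the degree-`s` homogeneous component. -/
noncomputable def projD (d : κ → ℤ) (s : ℤ) :
    (κ → MvPolynomial (Fin (n+1)) A) →ₗ[A] (κ → MvPolynomial (Fin (n+1)) A) :=
  LinearMap.pi (fun k => (projP (s - d k)).comp (LinearMap.proj k))

lemma aux_projD_coeff (v : κ → MvPolynomial (Fin (n+1)) A) (s : ℤ) (k : κ) (β : Exp n) :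
    ((projD d s v) k).coeff β = if (degE β : ℤ) + d k = s then (v k).coeff β else 0 := by
  classical
  have hwrite : (projD d s v) k = projP (s - d k) (v k) := rfl
  rw [hwrite, projP]
  by_cases h : 0 ≤ s - d k
  · rw [if_pos h, coeff_homogeneousComponent]
    have heq : (β.degree = (s - d k).toNat) ↔ ((degE β : ℤ) + d k = s) := by
      rw [← aux_degE_eq_degree]
      constructor <;> intro hh <;> omega
    by_cases h2 : (degE β : ℤ) + d k = s
    · rw [if_pos (heq.mpr h2), if_pos h2]
    · rw [if_neg (fun hh => h2 (heq.mp hh)), if_neg h2]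
  · rw [if_neg h]
    have h2 : ¬ ((degE β : ℤ) + d k = s) := by
      intro hh
      apply h
      have hnn : (0:ℤ) ≤ (degE β : ℤ) := Int.ofNat_nonneg _
      omega
    rw [if_neg h2, LinearMap.zero_apply, MvPolynomial.coeff_zero]

lemma aux_projD_eq_self {v : κ → MvPolynomial (Fin (n+1)) A} {s : ℤ}
    (hv : v ∈ homogCompV A d s) : projD d s v = v := by
  funext k
  apply MvPolynomial.ext
  intro β
  rw [aux_projD_coeff]
  by_cases h : (degE β : ℤ) + d k = s
  · rw [if_pos h]
  · rw [if_neg h]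
    by_cases h2 : (v k).coeff β = 0
    · rw [h2]
    · exact absurd (hv k β (MvPolynomial.mem_support_iff.mpr h2)) h

lemma aux_projD_vanish {v : κ → MvPolynomial (Fin (n+1)) A} {t s : ℤ}
    (hv : v ∈ homogCompV A d t) (hts : t ≠ s) : projD d s v = 0 := by
  funext k
  rw [Pi.zero_apply]
  apply MvPolynomial.ext
  intro β
  rw [aux_projD_coeff, MvPolynomial.coeff_zero]
  by_cases h : (degE β : ℤ) + d k = s
  · rw [if_pos h]
    by_cases h2 : (v k).coeff β = 0
    · exact h2
    · exfalso
      have h3 := hv k β (MvPolynomial.mem_support_iff.mpr h2)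
      exact hts (by omega)
  · rw [if_neg h]

lemma aux_projD_GSdeg (hG : IsMarkedSetV d J P gb) (s : ℤ)
    {w : κ → MvPolynomial (Fin (n+1)) A} (hw : w ∈ MMset P gb) :
    projD d s w ∈ Submodule.span A (GSdeg d P gb s) := by
  obtain ⟨k, α, δ, hα, hmm, rfl⟩ := hw
  have hhom := aux_homog_monomial_smul d δ (aux_homog_g hG hα)
  by_cases h : (degE δ : ℤ) + ((degE α : ℤ) + d k) = s
  · rw [aux_projD_eq_self (h ▸ hhom)]
    exact Submodule.subset_span ⟨k, α, hα, δ, hmm, by linarith, rfl⟩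
  · rw [aux_projD_vanish hhom h]
    exact Submodule.zero_mem _

lemma aux_span_MM_homog (hG : IsMarkedSetV d J P gb) (s : ℤ)
    {v : κ → MvPolynomial (Fin (n+1)) A} (hv : v ∈ Submodule.span A (MMset P gb))
    (hvs : v ∈ homogCompV A d s) : v ∈ Submodule.span A (GSdeg d P gb s) := by
  have hproj : projD d s v ∈ Submodule.span A (GSdeg d P gb s) := by
    refine Submodule.span_induction
      (p := fun w _ => projD (A := A) d s w ∈ Submodule.span A (GSdeg d P gb s))
      ?_ ?_ ?_ ?_ hv
    · intro x hx
      exact aux_projD_GSdeg hG s hx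
    · show projD (A := A) d s 0 ∈ _
      rw [map_zero]
      exact Submodule.zero_mem _
    · intro x y _ _ hx hy
      rw [map_add]
      exact Submodule.add_mem _ hx hy
    · intro a x _ hx
      rw [map_smul]
      exact Submodule.smul_mem _ _ hx
  rwa [aux_projD_eq_self hvs] at hproj

/-- Local involutivity propagates: every monomial multiple of an element of the marked
set lies in the span of the multiplicative multiples. -/
lemma aux_UP [Nonempty κ]
    (hQS : ∀ k, IsMonomialIdeal (J k) ∧ IsPommaretBasis (P k) (J k))
    (hG : IsMarkedSetV d J P gb)
    (Hnm : ∀ k, ∀ α ∈ P k, ∀ j : Fin (n+1), ¬ mult α j →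
      (X j : MvPolynomial (Fin (n+1)) A) • gb α k ∈ Submodule.span A (MMset P gb)) :
    ∀ δ : Exp n, ∀ k, ∀ α ∈ P k,
      monomial δ (1:A) • gb α k ∈ Submodule.span A (MMset P gb) := by
  classical
  intro δ0
  refine aux_lexLt_wf.induction (C := fun δ => ∀ k, ∀ α ∈ P k,
    monomial δ (1:A) • gb α k ∈ Submodule.span A (MMset P gb)) δ0 ?_
  intro δ IH k α hα
  by_cases hδ0 : δ = 0
  · subst hδ0
    exact Submodule.subset_span ⟨k, α, 0, hα, aux_multExp_zero α, rfl⟩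
  have hsupp : δ.support.Nonempty := Finsupp.support_nonempty_iff.mpr hδ0
  set j := δ.support.max' hsupp with hjdef
  have hjmem : j ∈ δ.support := δ.support.max'_mem hsupp
  have hjmax : ∀ l ∈ δ.support, l ≤ j := fun l hl => Finset.le_max' _ l hl
  have hjup : ∀ l, j < l → δ l = 0 := by
    intro l hl
    by_contra hcc
    exact absurd (hjmax l (Finsupp.mem_support_iff.mpr hcc)) (not_le.mpr hl)
  by_cases hmj : mult α j
  · refine Submodule.subset_span ⟨k, α, δ, hα, ?_, rfl⟩
    intro i hi m hmm
    exact (hjmax i hi).trans (hmj m hmm)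
  have h0 := Hnm k α hα j hmj
  obtain ⟨c, hc, hsum⟩ := Submodule.mem_span_set.mp h0
  have hjle : Finsupp.single j 1 ≤ δ := Finsupp.single_le_iff.mpr
    (Nat.one_le_iff_ne_zero.mpr (Finsupp.mem_support_iff.mp hjmem))
  have hXsm : monomial δ (1:A) • gb α k
      = monomial (δ - Finsupp.single j 1) (1:A)
        • ((X j : MvPolynomial (Fin (n+1)) A) • gb α k) := by
    rw [aux_X_eq, aux_monomial_smul_smul, tsub_add_cancel_of_le hjle]
  rcases c.support.eq_empty_or_nonempty with hemp | hne
  · rw [hXsm, ← hsum, Finsupp.sum, hemp, Finset.sum_empty, smul_zero]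
    exact Submodule.zero_mem _
  obtain ⟨kf, af, df, hidx, v0, hv0, hJ0, hcoeff, hmax⟩ := aux_repr_control hQS hG c hc hne
  have hc0 : c v0 ≠ 0 := Finsupp.mem_support_iff.mp hv0
  rw [hsum] at hcoeff
  have hne0 : (((X j : MvPolynomial (Fin (n+1)) A) • gb α k) (kf v0)).coeff
      (df v0 + af v0) ≠ 0 := by
    rw [hcoeff]
    exact hc0
  rw [aux_smul_apply, aux_X_eq] at hne0
  obtain ⟨β, hβ, hβeq⟩ := aux_coeff_monomial_mul_ne hne0
  obtain ⟨hP0, hM0, hE0⟩ := hidx v0 hv0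
  have hlt0 : lexLt (df v0) (Finsupp.single j 1) := by
    rcases aux_g_coeff hG hα hβ with ⟨hk, hβα⟩ | ⟨hβJ, -⟩
    · refine aux_H (hQS (kf v0)).2 ?_ hP0 hmj hM0 ?_
      · rw [hk]
        exact hα
      · rw [hβα] at hβeq
        exact hβeq.symm
    · by_contra hnl
      rcases aux_gkl hβeq.symm hM0 hnl with ⟨-, h2'⟩ | ⟨ε, -, -, hεeq⟩
      · exact hβJ (h2' ▸ aux_self_memJ hQS hP0)
      · exact hβJ (hεeq ▸ (hQS (kf v0)).1 (af v0) (aux_self_memJ hQS hP0) ε)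
  have hlex : ∀ v ∈ c.support, lexLt (df v) (Finsupp.single j 1) := by
    intro v hv
    rcases eq_or_ne (df v) (df v0) with h | h
    · rw [h]
      exact hlt0
    · rcases aux_lexLt_total h with h' | h'
      · exact aux_lexLt_trans h' hlt0
      · exact absurd h' (hmax v hv)
  rw [hXsm, ← hsum, Finsupp.sum, Finset.smul_sum]
  refine Submodule.sum_mem _ ?_
  intro v hv
  obtain ⟨hPv, hMv, hEv⟩ := hidx v hv
  rw [smul_comm]
  refine Submodule.smul_mem _ _ ?_
  rw [hEv, aux_monomial_smul_smul]
  refine IH (δ - Finsupp.single j 1 + df v) ?_ (kf v) (af v) hPv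
  have hdfj : ∀ l, j ≤ l → df v l = 0 := by
    obtain ⟨i, hi, hab⟩ := hlex v hv
    have hij : i = j := by
      by_contra hcc
      rw [Finsupp.single_eq_of_ne' (fun hh => hcc hh.symm)] at hi
      omega
    subst hij
    intro l hl
    rcases eq_or_lt_of_le hl with rfl | hl'
    · have h3 := hi
      rw [Finsupp.single_eq_same] at h3
      omega
    · have h3 := hab l hl'
      rw [Finsupp.single_eq_of_ne' (ne_of_lt hl')] at h3
      exact h3
  refine ⟨j, ?_, ?_⟩
  · rw [Finsupp.add_apply, Finsupp.tsub_apply, Finsupp.single_eq_same, hdfj j le_rfl]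
    have h4 : δ j ≠ 0 := Finsupp.mem_support_iff.mp hjmem
    omega
  · intro l hl
    rw [Finsupp.add_apply, Finsupp.tsub_apply, Finsupp.single_eq_of_ne' (ne_of_lt hl),
      hdfj l (le_of_lt hl)]
    simp

lemma aux_smul_mem [Nonempty κ]
    (hQS : ∀ k, IsMonomialIdeal (J k) ∧ IsPommaretBasis (P k) (J k))
    (hG : IsMarkedSetV d J P gb)
    (Hnm : ∀ k, ∀ α ∈ P k, ∀ j : Fin (n+1), ¬ mult α j →
      (X j : MvPolynomial (Fin (n+1)) A) • gb α k ∈ Submodule.span A (MMset P gb)) :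
    ∀ (p : MvPolynomial (Fin (n+1)) A) (w : κ → MvPolynomial (Fin (n+1)) A),
      w ∈ Submodule.span A (MMset P gb) → p • w ∈ Submodule.span A (MMset P gb) := by
  intro p
  induction p using MvPolynomial.induction_on' with
  | monomial u a =>
    intro w hw
    have hmon : (monomial u a : MvPolynomial (Fin (n+1)) A) • w
        = a • (monomial u (1:A) • w) := by
      have h2 : a • (monomial u (1:A)) = (monomial u a : MvPolynomial (Fin (n+1)) A) := by
        rw [smul_monomial, smul_eq_mul, mul_one]
      rw [← h2, smul_assoc]
    rw [hmon]
    refine Submodule.smul_mem _ _ ?_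
    refine Submodule.span_induction
      (p := fun x _ => monomial u (1:A) • x ∈ Submodule.span A (MMset P gb)) ?_ ?_ ?_ ?_ hw
    · rintro x ⟨k, α, δ, hα, hmm, rfl⟩
      rw [aux_monomial_smul_smul]
      exact aux_UP hQS hG Hnm (u + δ) k α hα
    · show monomial u (1:A) • (0 : κ → MvPolynomial (Fin (n+1)) A) ∈ _
      rw [smul_zero]
      exact Submodule.zero_mem _
    · intro x y _ _ hx hy
      rw [smul_add]
      exact Submodule.add_mem _ hx hy
    · intro b x _ hx
      rw [smul_comm]
      exact Submodule.smul_mem _ _ hx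
  | add p q hp hq =>
    intro w hw
    rw [add_smul]
    exact Submodule.add_mem _ (hp w hw) (hq w hw)

lemma aux_GmodS_le [Nonempty κ]
    (hQS : ∀ k, IsMonomialIdeal (J k) ∧ IsPommaretBasis (P k) (J k))
    (hG : IsMarkedSetV d J P gb)
    (Hnm : ∀ k, ∀ α ∈ P k, ∀ j : Fin (n+1), ¬ mult α j →
      (X j : MvPolynomial (Fin (n+1)) A) • gb α k ∈ Submodule.span A (MMset P gb)) :
    (GmodS P gb).restrictScalars A ≤ Submodule.span A (MMset P gb) := by
  intro v hv
  have hv' : v ∈ Submodule.span (MvPolynomial (Fin (n+1)) A) (GSet P gb) := hv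
  refine Submodule.span_induction
    (p := fun x _ => x ∈ Submodule.span A (MMset P gb)) ?_ ?_ ?_ ?_ hv'
  · rintro x ⟨k, α, hα, rfl⟩
    exact Submodule.subset_span ⟨k, α, 0, hα, aux_multExp_zero α,
      by rw [monomial_zero', C_1, one_smul]⟩
  · exact Submodule.zero_mem _
  · intro x y _ _ hx hy
    exact Submodule.add_mem _ hx hy
  · intro a x _ hx
    exact aux_smul_mem hQS hG Hnm a x hx

lemma aux_GS_le_GmodDeg (hG : IsMarkedSetV d J P gb) (s : ℤ) :
    Submodule.span A (GSdeg d P gb s) ≤ GmodDeg d P gb s := by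
  rw [Submodule.span_le]
  rintro v ⟨k, α, hα, δ, hmm, hdeg, rfl⟩
  refine Submodule.mem_inf.mpr ⟨?_, ?_⟩
  · exact Submodule.smul_mem (GmodS P gb) _ (Submodule.subset_span ⟨k, α, hα, rfl⟩)
  · have hhom := aux_homog_monomial_smul d δ (aux_homog_g hG hα)
    have h2 : (degE δ : ℤ) + ((degE α : ℤ) + d k) = s := by linarith
    rwa [h2] at hhom

lemma aux_down [Nonempty κ]
    (hQS : ∀ k, IsMonomialIdeal (J k) ∧ IsPommaretBasis (P k) (J k))
    (hsat : ∀ k, J k = satTerms (J k))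
    (hG : IsMarkedSetV d J P gb)
    {r : ℤ} (hX : (GmodS P gb).restrictScalars A ⊓ Submodule.span A (NUTerms A J)
      ⊓ homogCompV A d (r + 1) = ⊥)
    {s : ℤ} (hs : s ≤ r + 1) :
    GmodDeg d P gb s ⊓ Submodule.span A (NUTermsDeg A d J s) = ⊥ := by
  rw [eq_bot_iff]
  intro h hmem
  obtain ⟨hG1, hN1⟩ := Submodule.mem_inf.mp hmem
  set t := (r + 1 - s).toNat with htdef
  have ht : (t : ℤ) = r + 1 - s := Int.toNat_of_nonneg (by omega)
  set m := Finsupp.single (0 : Fin (n+1)) t with hmdef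
  set h' := monomial m (1:A) • h with hh'
  obtain ⟨hG1', hH1'⟩ := Submodule.mem_inf.mp hG1
  have h'G : h' ∈ (GmodS P gb).restrictScalars A :=
    Submodule.smul_mem (GmodS P gb) _ hG1'
  have h'H : h' ∈ homogCompV A d (r+1) := by
    have hhom := aux_homog_monomial_smul d m hH1'
    have h2 : (degE m : ℤ) + s = r + 1 := by
      rw [hmdef, aux_degE_single]
      omega
    rwa [h2] at hhom
  have hZ := aux_NU_le_ZU (aux_NTD_le_NU s hN1)
  have h'N : h' ∈ Submodule.span A (NUTerms A J) := by
    refine aux_mem_of_termV _ _ ?_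
    intro k β' hβ'
    rw [hh', aux_smul_apply] at hβ'
    obtain ⟨β, hβ, hβeq⟩ := aux_coeff_monomial_mul_ne hβ'
    have hβJ : β ∉ J k := fun hcc => hβ (hZ k β hcc)
    have hβ'J : β' ∉ J k := by
      intro hcc
      apply hβJ
      rw [hsat k]
      refine aux_sat (hQS k).1 (hQS k).2 (t := t) ?_
      rw [add_comm]
      rw [hβeq, hmdef] at hcc
      exact hcc
    exact Submodule.subset_span ⟨k, β', hβ'J, rfl⟩
  have h'0 : h' = 0 := by
    have hb : h' ∈ ((GmodS P gb).restrictScalars A ⊓ Submodule.span A (NUTerms A J)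
        ⊓ homogCompV A d (r + 1)) :=
      Submodule.mem_inf.mpr ⟨Submodule.mem_inf.mpr ⟨h'G, h'N⟩, h'H⟩
    rw [hX] at hb
    simpa using hb
  rw [Submodule.mem_bot]
  funext k
  rw [Pi.zero_apply]
  apply MvPolynomial.ext
  intro β
  have hco : (h' k).coeff (m + β) = (h k).coeff β := by
    rw [hh', aux_smul_apply, aux_monomial_one_mul]
  rw [MvPolynomial.coeff_zero, ← hco, h'0, Pi.zero_apply, MvPolynomial.coeff_zero]

end AuxFinal

/-- if all the ideals `J^(k)` are saturated, then it suffices to check the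
marked-basis conditions in the single degree `reg(U) + 1`. -/
theorem statement10 {n : ℕ} {κ : Type*} [Fintype κ] [DecidableEq κ] (hm : Nonempty κ)
    {A : Type*} [CommRing A] [IsNoetherianRing A]
    (d : κ → ℤ) (J : κ → Set (Exp n)) (P : κ → Finset (Exp n))
    (hQS : ∀ k, IsMonomialIdeal (J k) ∧ IsPommaretBasis (P k) (J k))
    (hsat : ∀ k, J k = satTerms (J k))
    (gb : Exp n → κ → (κ → MvPolynomial (Fin (n+1)) A))
    (hG : IsMarkedSetV d J P gb)
    (r : ℤ) (hub : ∀ k, ∀ α ∈ P k, (degE α : ℤ) + d k ≤ r)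
    (hatt : ∃ k, ∃ α ∈ P k, (degE α : ℤ) + d k = r) :
    (MarkedBasisProp d J P gb ↔
      (GmodS P gb).restrictScalars A ⊓ Submodule.span A (NUTerms A J)
        ⊓ homogCompV A d (r + 1) = ⊥) ∧
    (((GmodS P gb).restrictScalars A ⊓ Submodule.span A (NUTerms A J)
        ⊓ homogCompV A d (r + 1) = ⊥) ↔
      GmodDeg d P gb (r + 1) = Submodule.span A (GSdeg d P gb (r + 1))) := by
  classical
  haveI : Nonempty κ := hm
  have hGdeg_le : ∀ s : ℤ, Submodule.span A (GSdeg d P gb s) ≤ GmodDeg d P gb s :=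
    fun s => aux_GS_le_GmodDeg hG s
  -- From the vanishing in degree r+1, `⟨G⟩ₛ = ⟨G⁽ˢ⁾⟩` for every degree s.
  have key1 : ((GmodS P gb).restrictScalars A ⊓ Submodule.span A (NUTerms A J)
      ⊓ homogCompV A d (r + 1) = ⊥) →
      ∀ s : ℤ, GmodDeg d P gb s ≤ Submodule.span A (GSdeg d P gb s) := by
    intro hX
    have hlow : ∀ s : ℤ, s ≤ r + 1 →
        GmodDeg d P gb s ≤ Submodule.span A (GSdeg d P gb s) := by
      intro s hs h hh
      obtain ⟨hh1, hh2⟩ := Submodule.mem_inf.mp hh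
      have hdec := aux_F1 hQS hG s hh2
      obtain ⟨w, hw, u, hu, hwu⟩ := Submodule.mem_sup.mp hdec
      have huG : u ∈ GmodDeg d P gb s := by
        have hwG : w ∈ GmodDeg d P gb s := hGdeg_le s hw
        have hu2 : u = h - w := by
          rw [← hwu]
          abel
        rw [hu2]
        exact Submodule.sub_mem _ hh hwG
      have hub2 : u ∈ GmodDeg d P gb s ⊓ Submodule.span A (NUTermsDeg A d J s) :=
        Submodule.mem_inf.mpr ⟨huG, hu⟩
      rw [aux_down hQS hsat hG hX hs, Submodule.mem_bot] at hub2
      rw [← hwu, hub2, add_zero]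
      exact hw
    have Hnm : ∀ k, ∀ α ∈ P k, ∀ j : Fin (n+1), ¬ mult α j →
        (X j : MvPolynomial (Fin (n+1)) A) • gb α k ∈ Submodule.span A (MMset P gb) := by
      intro k α hα j hj
      set t : ℤ := (degE α : ℤ) + d k + 1 with htd
      have hmem : (X j : MvPolynomial (Fin (n+1)) A) • gb α k ∈ GmodDeg d P gb t := by
        refine Submodule.mem_inf.mpr ⟨?_, ?_⟩
        · exact Submodule.smul_mem (GmodS P gb) _ (Submodule.subset_span ⟨k, α, hα, rfl⟩)
        · have hhom := aux_homog_monomial_smul d (Finsupp.single j 1) (aux_homog_g hG hα)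
          rw [aux_degE_single] at hhom
          rw [aux_X_eq]
          have h2 : ((1:ℕ):ℤ) + ((degE α : ℤ) + d k) = t := by
            push_cast
            omega
          rwa [h2] at hhom
      have hle : t ≤ r + 1 := by
        have := hub k α hα
        omega
      exact Submodule.span_mono (aux_GSdeg_subset_MMset t) (hlow t hle hmem)
    intro s h hh
    obtain ⟨hh1, hh2⟩ := Submodule.mem_inf.mp hh
    exact aux_span_MM_homog hG s (aux_GmodS_le hQS hG Hnm hh1) hh2
  constructor
  · -- first equivalence
    constructor
    · -- marked basis → vanishing in degree r+1
      intro hMB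
      rw [eq_bot_iff]
      intro h hh
      obtain ⟨hh12, hh3⟩ := Submodule.mem_inf.mp hh
      obtain ⟨hh1, hh2⟩ := Submodule.mem_inf.mp hh12
      have hNTD : h ∈ Submodule.span A (NUTermsDeg A d J (r+1)) :=
        aux_homog_NU_le_NTD (r+1) hh2 hh3
      have hmem : h ∈ GmodDeg d P gb (r+1) ⊓ Submodule.span A (NUTermsDeg A d J (r+1)) :=
        Submodule.mem_inf.mpr ⟨Submodule.mem_inf.mpr ⟨hh1, hh3⟩, hNTD⟩
      rw [(hMB (r+1)).2] at hmem
      exact hmem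
    · -- vanishing in degree r+1 → marked basis
      intro hX s
      constructor
      · refine le_antisymm ?_ ?_
        · exact le_trans (aux_F1 hQS hG s) (sup_le_sup_right (hGdeg_le s) _)
        · exact sup_le inf_le_right (aux_NTD_le_homog s)
      · rw [eq_bot_iff]
        intro h hh
        obtain ⟨hh1, hh2⟩ := Submodule.mem_inf.mp hh
        have hMM : h ∈ Submodule.span A (MMset P gb) :=
          Submodule.span_mono (aux_GSdeg_subset_MMset s) (key1 hX s hh1)
        have hZ : h ∈ ZUsub (A := A) J := aux_NU_le_ZU (aux_NTD_le_NU s hh2)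
        rw [Submodule.mem_bot]
        exact aux_ind hQS hG hMM hZ
  · -- second equivalence
    constructor
    · intro hX
      exact le_antisymm (key1 hX (r+1)) (hGdeg_le (r+1))
    · intro heq
      rw [eq_bot_iff]
      intro h hh
      obtain ⟨hh12, hh3⟩ := Submodule.mem_inf.mp hh
      obtain ⟨hh1, hh2⟩ := Submodule.mem_inf.mp hh12
      have hGd : h ∈ GmodDeg d P gb (r+1) := Submodule.mem_inf.mpr ⟨hh1, hh3⟩
      rw [heq] at hGd
      have hMM : h ∈ Submodule.span A (MMset P gb) :=
        Submodule.span_mono (aux_GSdeg_subset_MMset (r+1)) hGd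
      have hZ : h ∈ ZUsub (A := A) J := aux_NU_le_ZU hh2
      rw [Submodule.mem_bot]
      exact aux_ind hQS hG hMM hZ

end MB
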